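/- Let c ≥ 5 and let D be a rich c-partite tournament. Then D contains a q-cycle for some q > c. -/

import Mathlib

namespace MPT

variable {V : Type*}

/-- `D` together with the partition map `part : V → Fin c` is a `c`-partite tournament:
no arcs inside a partite set, and exactly one arc between any two vertices in
different partite sets. -/
structure IsCPT (D : Digraph V) (c : ℕ) (part : V → Fin c) : Prop where
  part_surj : Function.Surjective part
  not_adj_of_same : ∀ x y : V, part x = part y → ¬ D.Adj x y
  xor_adj : ∀ x y : V, part x ≠ part y → Xor' (D.Adj x y) (D.Adj y x)

/-- `f 0, f 1, …, f n` is a directed walk of length `n` from `x` to `y` in `D`. -/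
def IsWalk (D : Digraph V) (n : ℕ) (f : ℕ → V) (x y : V) : Prop :=
  f 0 = x ∧ f n = y ∧ ∀ i < n, D.Adj (f i) (f (i + 1))

/-- A digraph is strong if each vertex can reach each other vertex by a directed path. -/
def IsStrong (D : Digraph V) : Prop :=
  ∀ x y : V, x ≠ y → ∃ (n : ℕ) (f : ℕ → V), IsWalk D n f x y

/-- A `c`-partite tournament is rich if it is strong and every partite set has at
least two vertices. -/
def IsRich (D : Digraph V) (c : ℕ) (part : V → Fin c) : Prop :=
  IsStrong D ∧ ∀ p : Fin c, ∃ u v : V, u ≠ v ∧ part u = p ∧ part v = p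

/-- `D` contains a directed cycle with exactly `q` arcs (through `q` distinct vertices). -/
def HasCycle (D : Digraph V) (q : ℕ) : Prop :=
  ∃ f : ZMod q → V, Function.Injective f ∧ ∀ i : ZMod q, D.Adj (f i) (f (i + 1))

/-- The distance from `x` to `y`: the length of a shortest directed path. -/
noncomputable def dist (D : Digraph V) (x y : V) : ℕ :=
  sInf {n : ℕ | ∃ f : ℕ → V, IsWalk D n f x y}

/-- `{i, j} ≡ {s, t} (mod n)` as unordered pairs of residues. -/
def ModEqPair (n i j s t : ℕ) : Prop :=
  (i ≡ s [MOD n] ∧ j ≡ t [MOD n]) ∨ (i ≡ t [MOD n] ∧ j ≡ s [MOD n])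

/-- The arc rule of `Q¹_m` at the level of path indices: an arc from `x_i` to `x_j`
iff `j = i + 1`, or `i - j > 1` and `i ≢ j (mod c+1)`; with all arcs between the
residue classes of `s` and `t` (mod `c+1`) deleted. -/
def QArc (c s t i j : ℕ) : Prop :=
  (j = i + 1 ∨ (j + 1 < i ∧ ¬ i ≡ j [MOD c + 1])) ∧ ¬ ModEqPair (c + 1) i j s t

/-- The indices of `Q¹_m` that may be blown up into a larger independent set. -/
def QBlowup (c m s t i : ℕ) : Prop :=
  i = 1 ∨ i = 2 ∨ i = m - 1 ∨ i = m ∨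
  (s = 1 ∧ (t = 3 ∨ t = 4) ∧ i = t) ∨
  (i = m - 2 ∧ ModEqPair (c + 1) m (m - 2) s t) ∨
  (i = m - 3 ∧ ModEqPair (c + 1) m (m - 3) s t)

/-- `D` is obtained from the path-indexed digraph with arc rule `arc` on indices
`1, …, m` by replacing index `i` with an independent vertex set `A i`, where only
indices satisfying `allowed` may receive more than one vertex. -/
def IsBlowupOf (D : Digraph V) (m : ℕ) (arc : ℕ → ℕ → Prop) (allowed : ℕ → Prop) : Prop :=
  ∃ A : ℕ → Set V,
    (∀ v : V, ∃ i, 1 ≤ i ∧ i ≤ m ∧ v ∈ A i) ∧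
    (∀ i j, i ≠ j → Disjoint (A i) (A j)) ∧
    (∀ i, 1 ≤ i → i ≤ m → (A i).Nonempty) ∧
    (∀ i, 1 ≤ i → i ≤ m → ¬ allowed i → (A i).Subsingleton) ∧
    (∀ i j, 1 ≤ i → i ≤ m → 1 ≤ j → j ≤ m →
      ∀ u ∈ A i, ∀ w ∈ A j, (D.Adj u w ↔ arc i j))

/-- Membership in the family `𝒬¹_m`. -/
def IsInQ1 (D : Digraph V) (c m : ℕ) : Prop :=
  ∃ s t : ℕ, 1 ≤ s ∧ s + 1 < t ∧ t ≤ c + 1 ∧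
    IsBlowupOf D m (QArc c s t) (QBlowup c m s t)

/-- The four cases in which arcs between `A a` and `A b` get reversed to form `𝒬²_m`. -/
def QRevCase (c m s t a b : ℕ) : Prop :=
  (t = 3 ∧ s = 1 ∧ a = 2 ∧ b = 3) ∨
  (t = c + 1 ∧ s = 2 ∧ a = 1 ∧ b = 2) ∨
  (ModEqPair (c + 1) (m - 2) m s t ∧ a = m - 2 ∧ b = m - 1) ∨
  (ModEqPair (c + 1) (m - 1) (m - c) s t ∧ a = m - 1 ∧ b = m)

/-- The arc rule obtained from `QArc` by reversing all arcs from index `a` to index `b`. -/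
def QArcRev (c s t a b i j : ℕ) : Prop :=
  ((¬(i = a ∧ j = b) ∧ ¬(i = b ∧ j = a)) ∧ QArc c s t i j) ∨
  ((i = b ∧ j = a) ∧ QArc c s t a b)

/-- Membership in the family `𝒬²_m`. -/
def IsInQ2 (D : Digraph V) (c m : ℕ) : Prop :=
  ∃ s t a b : ℕ, 1 ≤ s ∧ s + 1 < t ∧ t ≤ c + 1 ∧ QRevCase c m s t a b ∧
    IsBlowupOf D m (QArcRev c s t a b) (QBlowup c m s t)

/-- Membership in the family `𝒬_m = 𝒬¹_m ∪ 𝒬²_m`. -/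
def IsInQ (D : Digraph V) (c m : ℕ) : Prop :=
  IsInQ1 D c m ∨ IsInQ2 D c m

/-- The arc rule of `W_m`: an arc from `x_i` to `x_j` iff `j = i + 1`, or
`i - j > 1` and `i ≢ j (mod c)`. -/
def WArc (c i j : ℕ) : Prop :=
  j = i + 1 ∨ (j + 1 < i ∧ ¬ i ≡ j [MOD c])

/-- The indices of `W_m` that are blown up (into sets of size at least two). -/
def WBlowup (m i : ℕ) : Prop :=
  i = 1 ∨ i = 2 ∨ i = m - 1 ∨ i = m

/-- Membership in the family `𝒲_m`. -/
def IsInW (D : Digraph V) (c m : ℕ) : Prop :=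
  ∃ A : ℕ → Set V,
    (∀ v : V, ∃ i, 1 ≤ i ∧ i ≤ m ∧ v ∈ A i) ∧
    (∀ i j, i ≠ j → Disjoint (A i) (A j)) ∧
    (∀ i, 1 ≤ i → i ≤ m → (A i).Nonempty) ∧
    (∀ i, 1 ≤ i → i ≤ m → WBlowup m i → ∃ u ∈ A i, ∃ w ∈ A i, u ≠ w) ∧
    (∀ i, 1 ≤ i → i ≤ m → ¬ WBlowup m i → (A i).Subsingleton) ∧
    (∀ i j, 1 ≤ i → i ≤ m → 1 ≤ j → j ≤ m →
      ∀ u ∈ A i, ∀ w ∈ A j, (D.Adj u w ↔ WArc c i j))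

/-- Membership in the family `ℋ`: there is an index `i` with `2 < i < c - 1`,
partite sets `W 2, …, W (c+1)` (with `W i` possibly of size one and all others of
size at least two) and a distinguished extra vertex `v1`, such that every vertex of
`W j₁` dominates every vertex of `W j₂` for `2 ≤ j₁ < j₂ ≤ c + 1`, there are no arcs
inside a `W j` nor between `v1` and `W i`, and between `v1` and each vertex of each
`W j` (`j ≠ i`) there is exactly one arc of arbitrary direction. -/
def IsInH (D : Digraph V) (c : ℕ) : Prop :=
  ∃ i : ℕ, 2 < i ∧ i + 1 < c ∧
  ∃ (W : ℕ → Set V) (v1 : V),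
    (∀ v : V, v = v1 ∨ ∃ j, 2 ≤ j ∧ j ≤ c + 1 ∧ v ∈ W j) ∧
    (∀ j, 2 ≤ j → j ≤ c + 1 → v1 ∉ W j) ∧
    (∀ j k, 2 ≤ j → j ≤ c + 1 → 2 ≤ k → k ≤ c + 1 → j ≠ k → Disjoint (W j) (W k)) ∧
    (W i).Nonempty ∧
    (∀ j, 2 ≤ j → j ≤ c + 1 → j ≠ i → ∃ u ∈ W j, ∃ w ∈ W j, u ≠ w) ∧
    (∀ j k, 2 ≤ j → j < k → k ≤ c + 1 → ∀ u ∈ W j, ∀ w ∈ W k, D.Adj u w ∧ ¬ D.Adj w u) ∧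
    (∀ j, 2 ≤ j → j ≤ c + 1 → ∀ u ∈ W j, ∀ w ∈ W j, ¬ D.Adj u w) ∧
    (∀ j, 2 ≤ j → j ≤ c + 1 → j ≠ i → ∀ u ∈ W j, Xor' (D.Adj v1 u) (D.Adj u v1)) ∧
    (∀ u ∈ W i, ¬ D.Adj v1 u ∧ ¬ D.Adj u v1) ∧
    ¬ D.Adj v1 v1

namespace BP
open List

variable {D : Digraph V}

theorem getElem_eq_of_eq {l : List V} {i j : ℕ} (hij : i = j) (hi : i < l.length)
    (hj : j < l.length) : l[i]'hi = l[j]'hj := by subst hij; rfl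

/-- cyclic list of distinct vertices -/
def CycList (D : Digraph V) (l : List V) : Prop :=
  l.Nodup ∧ ∀ i : ℕ, (h : i < l.length) →
    D.Adj (l[i]'h) (l[(i+1) % l.length]'(Nat.mod_lt _ (by omega)))

theorem CycList.rotate {l : List V} (h : CycList D l) (k : ℕ) : CycList D (l.rotate k) := by
  rcases h with ⟨hnd, hadj⟩
  refine ⟨(nodup_rotate).mpr hnd, ?_⟩
  intro i hi
  rw [length_rotate] at hi
  have hm : 0 < l.length := by omega
  simp only [getElem_rotate, length_rotate]
  have e1 : ((i + 1) % l.length + k) % l.length = ((i + k) % l.length + 1) % l.length := by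
    rw [Nat.mod_add_mod, Nat.mod_add_mod]; ring_nf
  rw [getElem_eq_of_eq e1 _ (Nat.mod_lt _ hm)]
  exact hadj ((i + k) % l.length) (Nat.mod_lt _ hm)

theorem hasCycle_of_cycList {l : List V} (h : CycList D l) (hne : l ≠ []) :
    HasCycle D l.length := by
  have hpos : 0 < l.length := length_pos_iff.mpr hne
  haveI : NeZero l.length := ⟨by omega⟩
  refine ⟨fun i => l[i.val]'(ZMod.val_lt i), ?_, ?_⟩
  · intro i j hij
    exact ZMod.val_injective _ ((List.Nodup.getElem_inj_iff h.1).mp hij)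
  · intro i
    have hv : (i + 1).val = (i.val + 1) % l.length := by
      rw [ZMod.val_add, ZMod.val_one_eq_one_mod, Nat.add_mod, Nat.mod_mod, ← Nat.add_mod]
    show D.Adj (l[i.val]'(ZMod.val_lt i)) (l[(i+1).val]'(ZMod.val_lt _))
    rw [getElem_eq_of_eq hv _ (Nat.mod_lt _ hpos)]
    exact h.2 i.val (ZMod.val_lt i)

theorem cycList_of_chain {l : List V} (hnd : l.Nodup) (hch : Chain' D.Adj l)
    (hw : ∀ h : l ≠ [], D.Adj (l.getLast h) (l.head h)) : CycList D l := by
  refine ⟨hnd, ?_⟩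
  intro i hi
  rcases Nat.lt_or_ge (i+1) l.length with h1 | h1
  · rw [getElem_eq_of_eq (Nat.mod_eq_of_lt h1) _ h1]
    have := isChain_iff_getElem.mp hch i (by omega)
    simpa using this
  · have hne : l ≠ [] := by intro h; subst h; simp at hi
    have hieq : i = l.length - 1 := by omega
    have hmod : (i+1) % l.length = 0 := by
      have : i + 1 = l.length := by omega
      simp [this]
    rw [getElem_eq_of_eq hmod _ (by omega), getElem_eq_of_eq hieq _ (by omega)]
    have := hw hne
    rwa [getLast_eq_getElem, head_eq_getElem_zero] at this

theorem CycList.chain' {l : List V} (h : CycList D l) : Chain' D.Adj l := by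
  rw [Chain', isChain_iff_getElem]
  intro i hi
  have := h.2 i (by omega)
  rw [getElem_eq_of_eq (Nat.mod_eq_of_lt (by omega)) _ (by omega)] at this
  simpa using this

theorem CycList.wrap {l : List V} (h : CycList D l) (hne : l ≠ []) :
    D.Adj (l.getLast hne) (l.head hne) := by
  have hpos : 0 < l.length := length_pos_iff.mpr hne
  have := h.2 (l.length - 1) (by omega)
  have hmod : (l.length - 1 + 1) % l.length = 0 := by
    have : l.length - 1 + 1 = l.length := by omega
    simp [this]
  rw [getElem_eq_of_eq hmod _ hpos] at this
  rwa [getLast_eq_getElem, head_eq_getElem_zero]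

theorem rotate_ne_nil {l : List V} (hne : l ≠ []) (k : ℕ) : l.rotate k ≠ [] := by
  intro h
  have := congrArg List.length h
  simp at this
  exact hne this

theorem head_rotate {l : List V} (hne : l ≠ []) (k : ℕ) :
    (l.rotate k).head (rotate_ne_nil hne k) =
      l[k % l.length]'(Nat.mod_lt _ (length_pos_iff.mpr hne)) := by
  rw [head_eq_getElem_zero]
  rw [getElem_rotate]
  exact getElem_eq_of_eq (by simp) _ _

theorem getLast_rotate {l : List V} (hne : l ≠ []) (k : ℕ) :
    (l.rotate k).getLast (rotate_ne_nil hne k) =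
      l[(l.length - 1 + k) % l.length]'(Nat.mod_lt _ (length_pos_iff.mpr hne)) := by
  rw [getLast_eq_getElem]
  rw [getElem_rotate]
  exact getElem_eq_of_eq (by simp) _ _

theorem nodup_rangeMap (f : ℕ → V) (r : ℕ)
    (hinj : ∀ a b, a < r → b < r → f a = f b → a = b) : ((range r).map f).Nodup := by
  refine List.Nodup.map_on ?_ (nodup_range ..)
  intro a ha b hb hab
  exact hinj a b (mem_range.mp ha) (mem_range.mp hb) hab

theorem chain'_rangeMap (f : ℕ → V) (r : ℕ)
    (h : ∀ t, t + 1 < r → D.Adj (f t) (f (t+1))) : Chain' D.Adj ((range r).map f) := by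
  rw [Chain', isChain_iff_getElem]
  intro i hi
  simp only [length_map, length_range] at hi
  simp only [List.get_eq_getElem, getElem_map, getElem_range]
  exact h i (by omega)

theorem rangeMap_ne_nil (f : ℕ → V) {r : ℕ} (hr : 0 < r) : (range r).map f ≠ [] := by
  intro h; have := congrArg List.length h; simp at this; omega

theorem head_rangeMap (f : ℕ → V) {r : ℕ} (hr : 0 < r) :
    ((range r).map f).head (rangeMap_ne_nil f hr) = f 0 := by
  rw [head_eq_getElem_zero]; simp

theorem getLast_rangeMap (f : ℕ → V) {r : ℕ} (hr : 0 < r) :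
    ((range r).map f).getLast (rangeMap_ne_nil f hr) = f (r - 1) := by
  rw [getLast_eq_getElem]; simp

theorem mem_rangeMap {f : ℕ → V} {r : ℕ} {x : V} :
    x ∈ (range r).map f ↔ ∃ t, t < r ∧ f t = x := by
  simp [List.mem_map, mem_range]

theorem cycList_append {A B : List V} (hA : Chain' D.Adj A) (hB : Chain' D.Adj B)
    (hndA : A.Nodup) (hndB : B.Nodup) (hdisj : ∀ x ∈ A, x ∉ B)
    (hAne : A ≠ []) (hBne : B ≠ [])
    (hAB : D.Adj (A.getLast hAne) (B.head hBne))
    (hBA : D.Adj (B.getLast hBne) (A.head hAne)) : CycList D (A ++ B) := by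
  apply cycList_of_chain
  · exact hndA.append hndB hdisj
  · refine isChain_append.mpr ⟨hA, hB, ?_⟩
    intro x hx y hy
    rw [getLast?_eq_getLast_of_ne_nil hAne] at hx
    rw [head?_eq_head hBne] at hy
    simp at hx hy
    subst hx; subst hy; exact hAB
  · intro h
    rw [getLast_append_of_ne_nil _ hBne, head_append_left hAne]
    exact hBA
variable {c : ℕ} {part : V → Fin c}

theorem adj_irrefl (hT : IsCPT D c part) (x : V) : ¬ D.Adj x x :=
  hT.not_adj_of_same x x rfl

theorem part_ne_of_adj (hT : IsCPT D c part) {x y : V} (h : D.Adj x y) : part x ≠ part y :=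
  fun hp => hT.not_adj_of_same x y hp h

theorem adj_asymm (hT : IsCPT D c part) {x y : V} (h : D.Adj x y) : ¬ D.Adj y x := by
  rcases hT.xor_adj x y (part_ne_of_adj hT h) with ⟨_, hb⟩ | ⟨_, ha⟩
  · exact hb
  · exact (ha h).elim

theorem adj_total (hT : IsCPT D c part) {x y : V} (hp : part x ≠ part y) :
    D.Adj x y ∨ D.Adj y x :=
  (hT.xor_adj x y hp).elim (fun h => Or.inl h.1) (fun h => Or.inr h.1)

theorem adj_of_not_adj (hT : IsCPT D c part) {x y : V} (hp : part x ≠ part y)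
    (h : ¬ D.Adj x y) : D.Adj y x :=
  (adj_total hT hp).resolve_left h

/-- minimal walk from `v` into the list `l` -/
theorem min_walk_to (hS : IsStrong D) {l : List V} (hl : l ≠ []) {v : V} (hv : v ∉ l) :
    ∃ (r : ℕ) (f : ℕ → V), 1 ≤ r ∧ f 0 = v ∧ (∀ i, i < r → D.Adj (f i) (f (i+1))) ∧
      f r ∈ l ∧ (∀ t, t < r → f t ∉ l) ∧ (∀ a b, a < b → b ≤ r → f a ≠ f b) := by
  classical
  set Q : ℕ → Prop := fun n => ∃ f : ℕ → V, f 0 = v ∧ (∀ i < n, D.Adj (f i) (f (i+1))) ∧ f n ∈ l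
    with hQdef
  have hQ : ∃ n, Q n := by
    obtain ⟨n, f, h0, hn, hadj⟩ := hS v (l.head hl) (by
      intro h; exact hv (h ▸ head_mem hl))
    exact ⟨n, f, h0, hadj, hn ▸ head_mem hl⟩
  obtain ⟨f, hf0, hadj, hfr⟩ := Nat.find_spec hQ
  set r := Nat.find hQ with hrdef
  have hmin : ∀ m, m < r → ¬ Q m := fun m hm => Nat.find_min hQ hm
  have hr1 : 1 ≤ r := by
    by_contra hcon
    have h0 : r = 0 := by omega
    rw [h0, hf0] at hfr
    exact hv hfr
  have hint : ∀ t, t < r → f t ∉ l := by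
    intro t ht hmem
    exact hmin t ht ⟨f, hf0, fun i hi => hadj i (by omega), hmem⟩
  refine ⟨r, f, hr1, hf0, hadj, hfr, hint, ?_⟩
  intro a b hab hbr heq
  set d := b - a with hd
  have hd1 : 1 ≤ d := by omega
  set g : ℕ → V := fun t => if t ≤ a then f t else f (t + d) with hg
  apply hmin (r - d) (by omega)
  refine ⟨g, ?_, ?_, ?_⟩
  · simpa [hg] using hf0
  · intro i hi
    by_cases h1 : i + 1 ≤ a
    · simp only [hg, if_pos (by omega : i ≤ a), if_pos h1]
      exact hadj i (by omega)
    · by_cases h2 : i ≤ a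
      · have hia : i = a := by omega
        simp only [hg, if_pos h2, if_neg h1]
        subst hia
        rw [heq]
        have : i + 1 + d = b + 1 := by omega
        rw [this]
        exact hadj b (by omega)
      · simp only [hg, if_neg h2, if_neg h1]
        have : i + 1 + d = i + d + 1 := by omega
        rw [this]
        exact hadj (i + d) (by omega)
  · show (if r - d ≤ a then f (r - d) else f (r - d + d)) ∈ l
    by_cases h3 : r - d ≤ a
    · rw [if_pos h3]
      have h4 : r - d = a := by omega
      have h5 : b = r := by omega
      rw [h4, heq, h5]; exact hfr
    · rw [if_neg h3]
      have e : r - d + d = r := by omega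
      rw [e]; exact hfr

/-- minimal walk from the list `l` to `v` -/
theorem min_walk_from (hS : IsStrong D) {l : List V} (hl : l ≠ []) {v : V} (hv : v ∉ l) :
    ∃ (r : ℕ) (f : ℕ → V), 1 ≤ r ∧ f 0 ∈ l ∧ (∀ i, i < r → D.Adj (f i) (f (i+1))) ∧
      f r = v ∧ (∀ t, 1 ≤ t → t ≤ r → f t ∉ l) ∧ (∀ a b, a < b → b ≤ r → f a ≠ f b) := by
  classical
  set Q : ℕ → Prop := fun n => ∃ f : ℕ → V, f 0 ∈ l ∧ (∀ i < n, D.Adj (f i) (f (i+1))) ∧ f n = v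
    with hQdef
  have hQ : ∃ n, Q n := by
    obtain ⟨n, f, h0, hn, hadj⟩ := hS (l.head hl) v (by
      intro h; exact hv (h ▸ head_mem hl))
    exact ⟨n, f, h0 ▸ head_mem hl, hadj, hn⟩
  obtain ⟨f, hf0, hadj, hfr⟩ := Nat.find_spec hQ
  set r := Nat.find hQ with hrdef
  have hmin : ∀ m, m < r → ¬ Q m := fun m hm => Nat.find_min hQ hm
  have hr1 : 1 ≤ r := by
    by_contra hcon
    have h0 : r = 0 := by omega
    rw [h0] at hfr
    rw [hfr] at hf0
    exact hv hf0
  have hint : ∀ t, 1 ≤ t → t ≤ r → f t ∉ l := by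
    intro t ht1 htr hmem
    rcases Nat.lt_or_ge t r with ht | ht
    · refine hmin (r - t) (by omega) ⟨fun s => f (t + s), by simpa using hmem, ?_, ?_⟩
      · intro i hi
        show D.Adj (f (t + i)) (f (t + (i + 1)))
        have e : t + (i + 1) = t + i + 1 := by omega
        rw [e]
        exact hadj (t + i) (by omega)
      · show f (t + (r - t)) = v
        have e2 : t + (r - t) = r := by omega
        rw [e2]; exact hfr
    · have h5 : t = r := by omega
      rw [h5, hfr] at hmem
      exact hv hmem
  refine ⟨r, f, hr1, hf0, hadj, hfr, hint, ?_⟩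
  intro a b hab hbr heq
  set d := b - a with hd
  have hd1 : 1 ≤ d := by omega
  set g : ℕ → V := fun t => if t ≤ a then f t else f (t + d) with hg
  apply hmin (r - d) (by omega)
  refine ⟨g, ?_, ?_, ?_⟩
  · simpa [hg] using hf0
  · intro i hi
    by_cases h1 : i + 1 ≤ a
    · simp only [hg, if_pos (by omega : i ≤ a), if_pos h1]
      exact hadj i (by omega)
    · by_cases h2 : i ≤ a
      · have hia : i = a := by omega
        simp only [hg, if_pos h2, if_neg h1]
        subst hia
        rw [heq]
        have : i + 1 + d = b + 1 := by omega
        rw [this]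
        exact hadj b (by omega)
      · simp only [hg, if_neg h2, if_neg h1]
        have : i + 1 + d = i + d + 1 := by omega
        rw [this]
        exact hadj (i + d) (by omega)
  · show (if r - d ≤ a then f (r - d) else f (r - d + d)) = v
    by_cases h3 : r - d ≤ a
    · rw [if_pos h3]
      have h4 : r - d = a := by omega
      have h5 : b = r := by omega
      rw [h4, heq, h5]; exact hfr
    · rw [if_neg h3]
      have e : r - d + d = r := by omega
      rw [e]; exact hfr

theorem exists_cycList (hT : IsCPT D c part) (hS : IsStrong D) (hc : 2 ≤ c) :
    ∃ l : List V, CycList D l ∧ l ≠ [] := by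
  classical
  obtain ⟨x, hx⟩ := hT.part_surj ⟨0, by omega⟩
  obtain ⟨y, hy⟩ := hT.part_surj ⟨1, by omega⟩
  have hxy : x ≠ y := by
    intro h
    rw [h, hy] at hx
    exact absurd hx (by simp [Fin.ext_iff])
  obtain ⟨n1, f, hf0, hfn, hfadj⟩ := hS x y hxy
  obtain ⟨n2, g, hg0, hgn, hgadj⟩ := hS y x hxy.symm
  have hn1 : 1 ≤ n1 := by
    by_contra hcon
    have h0 : n1 = 0 := by omega
    rw [h0, hf0] at hfn
    exact hxy hfn
  have hn2 : 1 ≤ n2 := by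
    by_contra hcon
    have h0 : n2 = 0 := by omega
    rw [h0, hg0] at hgn
    exact hxy hgn.symm
  set h : ℕ → V := fun t => if t ≤ n1 then f t else g (t - n1) with hh
  have hkey : ∀ i, n1 ≤ i → h i = g (i - n1) := by
    intro i hi
    rcases Nat.eq_or_lt_of_le hi with he | hlt
    · simp [hh, ← he, hfn, hg0]
    · simp [hh, Nat.not_le.mpr hlt]
  set Q : ℕ → Prop := fun M => 1 ≤ M ∧ ∃ w : ℕ → V, (∀ i, i < M → D.Adj (w i) (w (i+1))) ∧
    w M = w 0 with hQdef
  have hQ : ∃ M, Q M := by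
    refine ⟨n1 + n2, by omega, h, ?_, ?_⟩
    · intro i hi
      by_cases h1 : i + 1 ≤ n1
      · simp only [hh, if_pos (by omega : i ≤ n1), if_pos h1]
        exact hfadj i (by omega)
      · rw [hkey i (by omega), hkey (i+1) (by omega)]
        have e : i + 1 - n1 = i - n1 + 1 := by omega
        rw [e]
        exact hgadj (i - n1) (by omega)
    · rw [hkey (n1 + n2) (by omega)]
      have e : n1 + n2 - n1 = n2 := by omega
      rw [e, hgn]
      show x = if 0 ≤ n1 then f 0 else g (0 - n1)
      rw [if_pos (by omega : 0 ≤ n1), hf0]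
  obtain ⟨hM1, w, hwadj, hwc⟩ := Nat.find_spec hQ
  set M := Nat.find hQ with hMdef
  have hmin : ∀ m, m < M → ¬ Q m := fun m hm => Nat.find_min hQ hm
  have hinj : ∀ a b, a < b → b < M → w a ≠ w b := by
    intro a b hab hbM heq
    apply hmin (b - a) (by omega)
    refine ⟨by omega, fun t => w (a + t), ?_, ?_⟩
    · intro i hi
      show D.Adj (w (a + i)) (w (a + (i+1)))
      have e : a + (i + 1) = a + i + 1 := by omega
      rw [e]
      exact hwadj (a + i) (by omega)
    · show w (a + (b - a)) = w (a + 0)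
      have e : a + (b - a) = b := by omega
      rw [e]
      simpa using heq.symm
  refine ⟨(range M).map w, ?_, rangeMap_ne_nil w (by omega)⟩
  apply cycList_of_chain
  · exact nodup_rangeMap w M (by
      intro a b ha hb heq
      by_contra hne
      rcases Nat.lt_or_ge a b with h1 | h1
      · exact hinj a b h1 hb heq
      · exact hinj b a (by omega) ha heq.symm)
  · exact chain'_rangeMap w M (fun t ht => hwadj t (by omega))
  · intro hne
    rw [getLast_rangeMap w (by omega), head_rangeMap w (by omega), ← hwc]
    have e : M - 1 + 1 = M := by omega
    have := hwadj (M-1) (by omega)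
    rwa [e] at this

theorem extend (hT : IsCPT D c part) (hS : IsStrong D) {l : List V} (hl : CycList D l)
    (hne : l ≠ []) {p : Fin c} (hp : ∀ x ∈ l, part x ≠ p) :
    ∃ l' : List V, CycList D l' ∧ l.length < l'.length ∧ l' ≠ [] := by
  classical
  obtain ⟨v, hv⟩ := hT.part_surj p
  have hvl : v ∉ l := fun h => hp v h hv
  have hm : 0 < l.length := length_pos_iff.mpr hne
  have hpart : ∀ j, (hj : j < l.length) → part (l[j]'hj) ≠ part v := by
    intro j hj
    rw [hv]
    exact hp _ (getElem_mem hj)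
  have htot : ∀ j, (hj : j < l.length) → D.Adj (l[j]'hj) v ∨ D.Adj v (l[j]'hj) :=
    fun j hj => adj_total hT (hpart j hj)
  by_cases hins : ∃ j, ∃ hj : j + 1 < l.length,
      D.Adj (l[j]'(by omega)) v ∧ D.Adj v (l[j+1]'hj)
  · obtain ⟨j, hj, hin, hout⟩ := hins
    refine ⟨l.rotate (j+1) ++ [v], ?_, by simp, by simp⟩
    refine cycList_append ((hl.rotate (j+1)).chain') (isChain_singleton v) ?_ ?_ ?_
      (rotate_ne_nil hne (j+1)) (by simp) ?_ ?_
    · exact nodup_rotate.mpr hl.1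
    · exact nodup_singleton v
    · intro x hx hxv
      simp at hxv
      subst hxv
      exact hvl (mem_rotate.mp hx)
    · rw [getLast_rotate hne (j+1)]
      show D.Adj _ v
      have e : (l.length - 1 + (j + 1)) % l.length = j := by
        have e2 : l.length - 1 + (j + 1) = l.length + j := by omega
        rw [e2, Nat.add_mod_left, Nat.mod_eq_of_lt (by omega)]
      rw [getElem_eq_of_eq e _ (by omega)]
      exact hin
    · show D.Adj v _
      rw [head_rotate hne (j+1)]
      rw [getElem_eq_of_eq (Nat.mod_eq_of_lt (by omega : j + 1 < l.length)) _ hj]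
      exact hout
  · by_cases hwins : D.Adj (l[l.length - 1]'(by omega)) v ∧ D.Adj v (l[0]'hm)
    · refine ⟨l ++ [v], ?_, by simp, by simp⟩
      refine cycList_append hl.chain' (isChain_singleton v) hl.1 (nodup_singleton v) ?_
        hne (by simp) ?_ ?_
      · intro x hx hxv
        simp at hxv
        subst hxv
        exact hvl hx
      · rw [getLast_eq_getElem]
        exact hwins.1
      · show D.Adj v _
        rw [head_eq_getElem_zero]
        exact hwins.2
    · -- no insertion anywhere: all-in or all-out
      have hstep : ∀ j, (hj : j + 1 < l.length) → D.Adj (l[j]'(by omega)) v →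
          D.Adj (l[j+1]'hj) v := by
        intro j hj hin
        rcases htot (j+1) hj with h | h
        · exact h
        · exact absurd ⟨j, hj, hin, h⟩ hins
      by_cases hIn0 : D.Adj (l[0]'hm) v
      · -- all-in
        have hall : ∀ j, (hj : j < l.length) → D.Adj (l[j]'hj) v := by
          intro j
          induction j with
          | zero => intro _; exact hIn0
          | succ k ih => intro hj; exact hstep k hj (ih (by omega))
        obtain ⟨r, f, hr1, hf0, hfadj, hfr, hint, hinj⟩ := min_walk_to hS hne hvl
        obtain ⟨j, hj, hjeq⟩ := List.getElem_of_mem hfr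
        refine ⟨(range r).map f ++ l.rotate j, ?_, by simp; omega,
          append_ne_nil_of_right_ne_nil _ (rotate_ne_nil hne j)⟩
        refine cycList_append (chain'_rangeMap f r (fun t ht => hfadj t (by omega)))
          ((hl.rotate j).chain')
          (nodup_rangeMap f r (fun a b ha hb heq => by
            by_contra hne2
            rcases Nat.lt_or_ge a b with h1 | h1
            · exact hinj a b h1 (by omega) heq
            · exact hinj b a (by omega) (by omega) heq.symm))
          (nodup_rotate.mpr hl.1) ?_ (rangeMap_ne_nil f (by omega))
          (rotate_ne_nil hne j) ?_ ?_
        · intro x hx hx2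
          obtain ⟨t, ht, hteq⟩ := mem_rangeMap.mp hx
          exact hint t ht (hteq ▸ mem_rotate.mp hx2)
        · rw [getLast_rangeMap f (by omega), head_rotate hne j]
          rw [getElem_eq_of_eq (Nat.mod_eq_of_lt hj) _ hj, hjeq]
          have e : r - 1 + 1 = r := by omega
          have := hfadj (r-1) (by omega)
          rwa [e] at this
        · rw [getLast_rotate hne j, head_rangeMap f (by omega), hf0]
          exact hall _ _
      · have hOut0 : D.Adj v (l[0]'hm) := (htot 0 hm).resolve_left hIn0
        -- all-out
        have hall : ∀ j, (hj : j < l.length) → D.Adj v (l[j]'hj) := by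
          intro j hj
          rcases htot j hj with h | h
          · exfalso
            -- from In j, chain up to In (length-1), then wrap insertion
            have hup : ∀ t, (ht : j + t < l.length) → D.Adj (l[j+t]'ht) v := by
              intro t
              induction t with
              | zero => intro ht; exact h
              | succ k ih =>
                intro ht
                have e : j + (k+1) = (j + k) + 1 := by omega
                rw [getElem_eq_of_eq e _ (by omega)]
                exact hstep (j+k) (by omega) (ih (by omega))
            have hlast : D.Adj (l[l.length - 1]'(by omega)) v := by
              have := hup (l.length - 1 - j) (by omega)
              rw [getElem_eq_of_eq (by omega : j + (l.length - 1 - j) = l.length - 1) _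
                (by omega)] at this
              exact this
            exact hwins ⟨hlast, hOut0⟩
          · exact h
        obtain ⟨r, f, hr1, hf0, hfadj, hfr, hint, hinj⟩ := min_walk_from hS hne hvl
        obtain ⟨j, hj, hjeq⟩ := List.getElem_of_mem hf0
        refine ⟨l.rotate ((j+1) % l.length) ++ (range r).map (fun t => f (t+1)), ?_,
          by simp; omega, by simp; omega⟩
        refine cycList_append ((hl.rotate _).chain')
          (chain'_rangeMap _ r (fun t ht => hfadj (t+1) (by omega)))
          (nodup_rotate.mpr hl.1)
          (nodup_rangeMap _ r (fun a b ha hb heq => by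
            by_contra hne2
            rcases Nat.lt_or_ge a b with h1 | h1
            · exact hinj (a+1) (b+1) (by omega) (by omega) heq
            · exact hinj (b+1) (a+1) (by omega) (by omega) heq.symm))
          ?_ (rotate_ne_nil hne _) (rangeMap_ne_nil _ (by omega)) ?_ ?_
        · intro x hx hx2
          obtain ⟨t, ht, hteq⟩ := mem_rangeMap.mp hx2
          exact hint (t+1) (by omega) (by omega) (hteq ▸ mem_rotate.mp hx)
        · rw [getLast_rotate hne _, head_rangeMap _ (by omega)]
          have e : (l.length - 1 + (j + 1) % l.length) % l.length = j := by
            rw [Nat.add_mod_mod]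
            have e2 : l.length - 1 + (j + 1) = l.length + j := by omega
            rw [e2, Nat.add_mod_left, Nat.mod_eq_of_lt hj]
          rw [getElem_eq_of_eq e _ hj, hjeq]
          exact hfadj 0 (by omega)
        · rw [getLast_rangeMap _ (by omega), head_rotate hne _]
          have e : r - 1 + 1 = r := by omega
          rw [e, hfr]
          rw [getElem_eq_of_eq (Nat.mod_mod _ _) _ (Nat.mod_lt _ hm)]
          exact hall _ (Nat.mod_lt _ hm)
theorem length_ge_of_all_parts {l : List V} (hall : ∀ p : Fin c, ∃ x ∈ l, part x = p) :
    c ≤ l.length := by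
  classical
  have hsub : Finset.univ ⊆ (l.map part).toFinset := by
    intro p _
    obtain ⟨x, hx, hpx⟩ := hall p
    rw [List.mem_toFinset, List.mem_map]
    exact ⟨x, hx, hpx⟩
  calc c = Finset.univ.card := by simp
    _ ≤ (l.map part).toFinset.card := Finset.card_le_card hsub
    _ ≤ (l.map part).length := List.toFinset_card_le _
    _ = l.length := by simp

theorem grow (hT : IsCPT D c part) (hS : IsStrong D) (hc : 2 ≤ c) :
    ∀ n (l : List V), CycList D l → l ≠ [] → c ≤ l.length + n →
      (∃ q, c < q ∧ HasCycle D q) ∨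
        ∃ l' : List V, CycList D l' ∧ l'.length = c ∧ (∀ p : Fin c, ∃ x ∈ l', part x = p) := by
  intro n
  induction n with
  | zero =>
    intro l hl hne hlen
    simp only [Nat.add_zero] at hlen
    rcases Nat.lt_or_ge c l.length with h | h
    · exact Or.inl ⟨l.length, h, hasCycle_of_cycList hl hne⟩
    have heq : l.length = c := by omega
    by_cases hall : ∀ p : Fin c, ∃ x ∈ l, part x = p
    · exact Or.inr ⟨l, hl, heq, hall⟩
    · push_neg at hall
      obtain ⟨p, hp⟩ := hall
      obtain ⟨l', hl', hlt, hne'⟩ := extend hT hS hl hne hp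
      exact Or.inl ⟨l'.length, by omega, hasCycle_of_cycList hl' hne'⟩
  | succ k ih =>
    intro l hl hne hlen
    rcases Nat.lt_or_ge c l.length with h | h
    · exact Or.inl ⟨l.length, h, hasCycle_of_cycList hl hne⟩
    by_cases hall : ∀ p : Fin c, ∃ x ∈ l, part x = p
    · have hge := length_ge_of_all_parts hall
      exact Or.inr ⟨l, hl, by omega, hall⟩
    · push_neg at hall
      obtain ⟨p, hp⟩ := hall
      obtain ⟨l', hl', hlt, hne'⟩ := extend hT hS hl hne hp
      exact ih l' hl' hne' (by omega)
theorem drop_one_ne_nil {l : List V} (h2 : 2 ≤ l.length) : l.drop 1 ≠ [] := by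
  intro h
  have := congrArg List.length h
  simp at this
  omega

theorem nodup_drop_one {l : List V} (h : l.Nodup) : (l.drop 1).Nodup :=
  List.Pairwise.sublist (List.drop_sublist 1 l) h

theorem chain'_drop_one {l : List V} (h : Chain' D.Adj l) : Chain' D.Adj (l.drop 1) := by
  rw [Chain', isChain_iff_getElem] at h ⊢
  intro i hi
  simp only [length_drop] at hi
  simp only [List.get_eq_getElem, List.getElem_drop]
  have := h (1 + i) (by omega)
  rw [getElem_eq_of_eq (by omega : 1 + (i + 1) = 1 + i + 1) _ (by omega)]
  exact this

theorem head_drop_one {l : List V} (h2 : 2 ≤ l.length) :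
    (l.drop 1).head (drop_one_ne_nil h2) = l[1]'(by omega) := by
  rw [head_eq_getElem_zero]
  simp only [List.getElem_drop]

theorem getLast_drop_one {l : List V} (h2 : 2 ≤ l.length) :
    (l.drop 1).getLast (drop_one_ne_nil h2) = l[l.length - 1]'(by omega) := by
  rw [getLast_eq_getElem]
  simp only [List.getElem_drop, length_drop]
  exact getElem_eq_of_eq (by omega) _ _

theorem mem_of_mem_drop_one {l : List V} {x : V} (h : x ∈ l.drop 1) : x ∈ l :=
  List.mem_of_mem_drop h

/-- The key pattern lemma: a vertex `v` in the same partite set as `l[0]`, outside a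
cycle `l`, either yields a longer cycle, or dominates `l[1]` and is dominated by the
last element. -/
theorem pattern0 (hT : IsCPT D c part) (hS : IsStrong D) {l : List V} (hl : CycList D l)
    (hne : l ≠ []) (hlen : 3 ≤ l.length) {v : V} (hvl : v ∉ l)
    (hpj : ∀ j, 1 ≤ j → (hj : j < l.length) → part (l[j]'hj) ≠ part v) :
    (∃ q, l.length < q ∧ HasCycle D q) ∨
      (D.Adj v (l[1]'(by omega)) ∧ D.Adj (l[l.length - 1]'(by omega)) v) := by
  classical
  have hm : 0 < l.length := by omega
  have htot : ∀ j, 1 ≤ j → (hj : j < l.length) → D.Adj (l[j]'hj) v ∨ D.Adj v (l[j]'hj) :=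
    fun j h1 hj => adj_total hT (hpj j h1 hj)
  by_cases hins : ∃ j, 1 ≤ j ∧ ∃ hj : j + 1 < l.length,
      D.Adj (l[j]'(by omega)) v ∧ D.Adj v (l[j+1]'hj)
  · -- insertion gives an (m+1)-cycle
    obtain ⟨j, hj1, hj, hin, hout⟩ := hins
    left
    refine ⟨l.length + 1, by omega, ?_⟩
    have : CycList D (l.rotate (j+1) ++ [v]) := by
      refine cycList_append ((hl.rotate (j+1)).chain') (isChain_singleton v) ?_ ?_ ?_
        (rotate_ne_nil hne (j+1)) (by simp) ?_ ?_
      · exact nodup_rotate.mpr hl.1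
      · exact nodup_singleton v
      · intro x hx hxv
        simp at hxv
        subst hxv
        exact hvl (mem_rotate.mp hx)
      · rw [getLast_rotate hne (j+1)]
        show D.Adj _ v
        have e : (l.length - 1 + (j + 1)) % l.length = j := by
          have e2 : l.length - 1 + (j + 1) = l.length + j := by omega
          rw [e2, Nat.add_mod_left, Nat.mod_eq_of_lt (by omega)]
        rw [getElem_eq_of_eq e _ (by omega)]
        exact hin
      · show D.Adj v _
        rw [head_rotate hne (j+1)]
        rw [getElem_eq_of_eq (Nat.mod_eq_of_lt (by omega : j + 1 < l.length)) _ hj]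
        exact hout
    have hc := hasCycle_of_cycList this (append_ne_nil_of_right_ne_nil _ (by simp))
    simpa using hc
  · have hstep : ∀ j, 1 ≤ j → (hj : j + 1 < l.length) → D.Adj (l[j]'(by omega)) v →
        D.Adj (l[j+1]'hj) v := by
      intro j h1 hj hin
      rcases htot (j+1) (by omega) hj with h | h
      · exact h
      · exact absurd ⟨j, h1, hj, hin, h⟩ hins
    by_cases hIn1 : D.Adj (l[1]'(by omega)) v
    · -- all-in on indices 1..m-1: build a long cycle through a shortest path from v back
      left
      have hall : ∀ j, 1 ≤ j → (hj : j < l.length) → D.Adj (l[j]'hj) v := by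
        intro j
        induction j with
        | zero => intro h1; exact absurd h1 (by omega)
        | succ k ih =>
          intro _ hj
          rcases Nat.lt_or_ge k 1 with hk | hk
          · have hk0 : k = 0 := by omega
            subst hk0
            exact hIn1
          · exact hstep k hk hj (ih hk (by omega))
      obtain ⟨r, f, hr1, hf0, hfadj, hfr, hint, hinj⟩ := min_walk_to hS hne hvl
      obtain ⟨j, hj, hjeq⟩ := List.getElem_of_mem hfr
      by_cases hj1 : j = 1
      · -- path enters at l[1]: drop l[0]
        subst hj1
        have hr2 : 2 ≤ r := by
          rcases Nat.lt_or_ge r 2 with h2 | h2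
          · exfalso
            have : r = 1 := by omega
            subst this
            have h01 := hfadj 0 (by omega)
            rw [hf0] at h01
            have h01' : D.Adj v (f 1) := by simpa using h01
            rw [← hjeq] at h01'
            exact adj_asymm hT (hall 1 (by omega) hj) h01' 
          · exact h2
        refine ⟨r + (l.length - 1), by omega, ?_⟩
        have hcyc : CycList D ((range r).map f ++ l.drop 1) := by
          refine cycList_append (chain'_rangeMap f r (fun t ht => hfadj t (by omega)))
            (chain'_drop_one hl.chain')
            (nodup_rangeMap f r (fun a b ha hb heq => by
              by_contra hne2
              rcases Nat.lt_or_ge a b with h1 | h1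
              · exact hinj a b h1 (by omega) heq
              · exact hinj b a (by omega) (by omega) heq.symm))
            (nodup_drop_one hl.1) ?_ (rangeMap_ne_nil f (by omega))
            (drop_one_ne_nil (by omega)) ?_ ?_
          · intro x hx hx2
            obtain ⟨t, ht, hteq⟩ := mem_rangeMap.mp hx
            exact hint t ht (hteq ▸ mem_of_mem_drop_one hx2)
          · rw [getLast_rangeMap f (by omega), head_drop_one (by omega), hjeq]
            have e : r - 1 + 1 = r := by omega
            have := hfadj (r-1) (by omega)
            rwa [e] at this
          · rw [getLast_drop_one (by omega), head_rangeMap f (by omega), hf0]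
            exact hall (l.length - 1) (by omega) (by omega)
        have hc := hasCycle_of_cycList hcyc
          (append_ne_nil_of_right_ne_nil _ (drop_one_ne_nil (by omega)))
        have e : ((range r).map f ++ l.drop 1).length = r + (l.length - 1) := by simp
        rwa [e] at hc
      · -- path enters elsewhere: keep the whole cycle
        have hwrapidx : 1 ≤ (l.length - 1 + j) % l.length ∧
            (l.length - 1 + j) % l.length < l.length := by
          constructor
          · rcases Nat.eq_zero_or_pos j with h0 | hpos
            · subst h0
              rw [Nat.mod_eq_of_lt (by omega)]
              omega
            · have e : l.length - 1 + j = l.length + (j - 1) := by omega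
              rw [e, Nat.add_mod_left, Nat.mod_eq_of_lt (by omega)]
              omega
          · exact Nat.mod_lt _ hm
        refine ⟨r + l.length, by omega, ?_⟩
        have hcyc : CycList D ((range r).map f ++ l.rotate j) := by
          refine cycList_append (chain'_rangeMap f r (fun t ht => hfadj t (by omega)))
            ((hl.rotate j).chain')
            (nodup_rangeMap f r (fun a b ha hb heq => by
              by_contra hne2
              rcases Nat.lt_or_ge a b with h1 | h1
              · exact hinj a b h1 (by omega) heq
              · exact hinj b a (by omega) (by omega) heq.symm))
            (nodup_rotate.mpr hl.1) ?_ (rangeMap_ne_nil f (by omega))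
            (rotate_ne_nil hne j) ?_ ?_
          · intro x hx hx2
            obtain ⟨t, ht, hteq⟩ := mem_rangeMap.mp hx
            exact hint t ht (hteq ▸ mem_rotate.mp hx2)
          · rw [getLast_rangeMap f (by omega), head_rotate hne j]
            rw [getElem_eq_of_eq (Nat.mod_eq_of_lt hj) _ hj, hjeq]
            have e : r - 1 + 1 = r := by omega
            have := hfadj (r-1) (by omega)
            rwa [e] at this
          · rw [getLast_rotate hne j, head_rangeMap f (by omega), hf0]
            exact hall _ hwrapidx.1 hwrapidx.2
        have hc := hasCycle_of_cycList hcyc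
          (append_ne_nil_of_right_ne_nil _ (rotate_ne_nil hne j))
        simpa using hc
    · have hOut1 : D.Adj v (l[1]'(by omega)) := (htot 1 (by omega) (by omega)).resolve_left hIn1
      by_cases hInLast : D.Adj (l[l.length - 1]'(by omega)) v
      · exact Or.inr ⟨hOut1, hInLast⟩
      · -- all-out on indices 1..m-1
        left
        have hOutLast : D.Adj v (l[l.length - 1]'(by omega)) :=
          (htot (l.length - 1) (by omega) (by omega)).resolve_left hInLast
        have hstep' : ∀ j, 1 ≤ j → (hj : j + 1 < l.length) → D.Adj v (l[j+1]'hj) →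
            D.Adj v (l[j]'(by omega)) := by
          intro j h1 hj hout
          rcases htot j h1 (by omega) with h | h
          · exact absurd (hstep j h1 hj h) (adj_asymm hT hout)
          · exact h
        have hall : ∀ j, 1 ≤ j → (hj : j < l.length) → D.Adj v (l[j]'hj) := by
          have hdown : ∀ t, (ht : t < l.length - 1) →
              D.Adj v (l[l.length - 1 - t]'(by omega)) := by
            intro t
            induction t with
            | zero => intro _; exact hOutLast
            | succ k ih =>
              intro ht
              have hk := ih (by omega)
              have e : l.length - 1 - k = (l.length - 1 - (k+1)) + 1 := by omega
              rw [getElem_eq_of_eq e _ (by omega)] at hk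
              exact hstep' _ (by omega) (by omega) hk
          intro j h1 hj
          have := hdown (l.length - 1 - j) (by omega)
          rw [getElem_eq_of_eq (by omega : l.length - 1 - (l.length - 1 - j) = j) _ hj] at this
          exact this
        obtain ⟨r, f, hr1, hf0, hfadj, hfr, hint, hinj⟩ := min_walk_from hS hne hvl
        obtain ⟨j, hj, hjeq⟩ := List.getElem_of_mem hf0
        by_cases hjlast : j = l.length - 1
        · -- leaves from the last vertex: drop l[0]
          subst hjlast
          have hr2 : 2 ≤ r := by
            rcases Nat.lt_or_ge r 2 with h2 | h2
            · exfalso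
              have : r = 1 := by omega
              subst this
              have := hfadj 0 (by omega)
              rw [hfr] at this
              rw [← hjeq] at this
              exact adj_asymm hT this (hall (l.length - 1) (by omega) (by omega))
            · exact h2
          refine ⟨(l.length - 1) + r, by omega, ?_⟩
          have hcyc : CycList D (l.drop 1 ++ (range r).map (fun t => f (t+1))) := by
            refine cycList_append (chain'_drop_one hl.chain')
              (chain'_rangeMap _ r (fun t ht => hfadj (t+1) (by omega)))
              (nodup_drop_one hl.1)
              (nodup_rangeMap _ r (fun a b ha hb heq => by
                by_contra hne2
                rcases Nat.lt_or_ge a b with h1 | h1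
                · exact hinj (a+1) (b+1) (by omega) (by omega) heq
                · exact hinj (b+1) (a+1) (by omega) (by omega) heq.symm))
              ?_ (drop_one_ne_nil (by omega)) (rangeMap_ne_nil _ (by omega)) ?_ ?_
            · intro x hx hx2
              obtain ⟨t, ht, hteq⟩ := mem_rangeMap.mp hx2
              exact hint (t+1) (by omega) (by omega) (hteq ▸ mem_of_mem_drop_one hx)
            · rw [getLast_drop_one (by omega), head_rangeMap _ (by omega), hjeq]
              exact hfadj 0 (by omega)
            · rw [getLast_rangeMap _ (by omega), head_drop_one (by omega)]
              have e : r - 1 + 1 = r := by omega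
              rw [e, hfr]
              exact hOut1
          have hc := hasCycle_of_cycList hcyc
            (append_ne_nil_of_right_ne_nil _ (rangeMap_ne_nil _ (by omega)))
          simpa using hc
        · -- leaves from l[j], j ≠ m-1
          refine ⟨l.length + r, by omega, ?_⟩
          have hj1 : j + 1 < l.length := by omega
          have hcyc : CycList D (l.rotate (j+1) ++ (range r).map (fun t => f (t+1))) := by
            refine cycList_append ((hl.rotate _).chain')
              (chain'_rangeMap _ r (fun t ht => hfadj (t+1) (by omega)))
              (nodup_rotate.mpr hl.1)
              (nodup_rangeMap _ r (fun a b ha hb heq => by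
                by_contra hne2
                rcases Nat.lt_or_ge a b with h1 | h1
                · exact hinj (a+1) (b+1) (by omega) (by omega) heq
                · exact hinj (b+1) (a+1) (by omega) (by omega) heq.symm))
              ?_ (rotate_ne_nil hne _) (rangeMap_ne_nil _ (by omega)) ?_ ?_
            · intro x hx hx2
              obtain ⟨t, ht, hteq⟩ := mem_rangeMap.mp hx2
              exact hint (t+1) (by omega) (by omega) (hteq ▸ mem_rotate.mp hx)
            · rw [getLast_rotate hne _, head_rangeMap _ (by omega)]
              have e : (l.length - 1 + (j + 1)) % l.length = j := by
                have e2 : l.length - 1 + (j + 1) = l.length + j := by omega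
                rw [e2, Nat.add_mod_left, Nat.mod_eq_of_lt hj]
              rw [getElem_eq_of_eq e _ hj, hjeq]
              exact hfadj 0 (by omega)
            · rw [getLast_rangeMap _ (by omega), head_rotate hne _]
              have e : r - 1 + 1 = r := by omega
              rw [e, hfr]
              rw [getElem_eq_of_eq (Nat.mod_eq_of_lt hj1) _ hj1]
              exact hall (j+1) (by omega) hj1
          have hc := hasCycle_of_cycList hcyc
            (append_ne_nil_of_right_ne_nil _ (rangeMap_ne_nil _ (by omega)))
          simpa using hc
theorem patternI (hT : IsCPT D c part) (hS : IsStrong D) {l : List V} (hl : CycList D l)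
    (hne : l ≠ []) (hlen : 3 ≤ l.length)
    (hpinj : ∀ j k, (hj : j < l.length) → (hk : k < l.length) →
      part (l[j]'hj) = part (l[k]'hk) → j = k)
    {i : ℕ} (hi : i < l.length) {v : V} (hvl : v ∉ l) (hpv : part v = part (l[i]'hi)) :
    (∃ q, l.length < q ∧ HasCycle D q) ∨
      (D.Adj v (l[(i+1) % l.length]'(Nat.mod_lt _ (by omega))) ∧
       D.Adj (l[(i + l.length - 1) % l.length]'(Nat.mod_lt _ (by omega))) v) := by
  have hm : 0 < l.length := by omega
  have hrlen : (l.rotate i).length = l.length := by simp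
  have h := pattern0 hT hS (hl.rotate i) (rotate_ne_nil hne i) (by omega)
    (v := v) (by rw [mem_rotate]; exact hvl) ?_
  · rcases h with ⟨q, hq, hcyc⟩ | ⟨h1, h2⟩
    · refine Or.inl ⟨q, ?_, hcyc⟩
      rw [hrlen] at hq
      exact hq
    · right
      constructor
      · rw [getElem_rotate] at h1
        rwa [getElem_eq_of_eq (by rw [Nat.add_comm] : (1 + i) % l.length = (i + 1) % l.length)
          _ (Nat.mod_lt _ hm)] at h1
      · rw [getElem_rotate] at h2
        have e : ((l.rotate i).length - 1 + i) % l.length = (i + l.length - 1) % l.length := by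
          rw [hrlen]
          congr 1
          omega
        rwa [getElem_eq_of_eq e _ (Nat.mod_lt _ hm)] at h2
  · intro j h1 hj hpeq
    rw [hrlen] at hj
    rw [getElem_rotate] at hpeq
    have hjm : (j + i) % l.length < l.length := Nat.mod_lt _ hm
    have heq2 : part (l[(j + i) % l.length]'hjm) = part (l[i]'hi) := by
      rw [← hpv]
      exact hpeq
    have hidx := hpinj _ _ hjm hi heq2
    rcases Nat.lt_or_ge (j + i) l.length with hlt | hge
    · rw [Nat.mod_eq_of_lt hlt] at hidx
      omega
    · have e3 : (j + i) % l.length = j + i - l.length := by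
        rw [Nat.mod_eq_sub_mod hge, Nat.mod_eq_of_lt (by omega)]
      rw [e3] at hidx
      omega

theorem endgame (hT : IsCPT D c part) (hS : IsStrong D)
    (hRich : ∀ p : Fin c, ∃ u w : V, u ≠ w ∧ part u = p ∧ part w = p)
    {l : List V} (hl : CycList D l) (hne : l ≠ []) (hlen : l.length = c) (hc : 3 ≤ c)
    (hall : ∀ p : Fin c, ∃ x ∈ l, part x = p) :
    ∃ q, c < q ∧ HasCycle D q := by
  classical
  have hc0 : 0 < c := by omega
  have hcm : ∀ x : ℕ, x % c < l.length := fun x => by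
    rw [hlen]; exact Nat.mod_lt _ hc0
  have hpinj : ∀ j k, (hj : j < l.length) → (hk : k < l.length) →
      part (l[j]'hj) = part (l[k]'hk) → j = k := by
    have hsurj : Function.Surjective (fun j : Fin l.length => part (l[j.val]'j.isLt)) := by
      intro p
      obtain ⟨x, hx, hpx⟩ := hall p
      obtain ⟨j, hj, hjeq⟩ := List.getElem_of_mem hx
      refine ⟨⟨j, hj⟩, ?_⟩
      show part (l[j]'hj) = p
      rw [hjeq, hpx]
    have hinj : Function.Injective (fun j : Fin l.length => part (l[j.val]'j.isLt)) :=
      (Finite.injective_iff_surjective_of_equiv (finCongr hlen)).mpr hsurj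
    intro j k hj hk hpeq
    have : (⟨j, hj⟩ : Fin l.length) = ⟨k, hk⟩ := hinj hpeq
    exact congrArg Fin.val this
  have hpartner : ∀ i : ℕ, ∃ v : V, ∀ hi : i < l.length, v ∉ l ∧ part v = part (l[i]'hi) := by
    intro i
    by_cases hi : i < l.length
    · obtain ⟨u, w, huw, hu, hw⟩ := hRich (part (l[i]'hi))
      by_cases hul : u = l[i]'hi
      · refine ⟨w, fun _ => ⟨?_, hw⟩⟩
        intro hwl
        obtain ⟨j, hj, hjeq⟩ := List.getElem_of_mem hwl
        have hji : j = i := hpinj j i hj hi (by rw [hjeq, hw])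
        apply huw
        rw [hul, ← hjeq]
        exact getElem_eq_of_eq hji.symm _ _
      · refine ⟨u, fun _ => ⟨?_, hu⟩⟩
        intro hul2
        obtain ⟨j, hj, hjeq⟩ := List.getElem_of_mem hul2
        have hji : j = i := hpinj j i hj hi (by rw [hjeq, hu])
        apply hul
        rw [← hjeq]
        exact getElem_eq_of_eq hji _ _
    · exact ⟨l.head hne, fun hi' => absurd hi' hi⟩
  choose W hW using hpartner
  by_cases hdone : ∃ q, c < q ∧ HasCycle D q
  · exact hdone
  have hm3 : 3 ≤ l.length := by omega
  have hpat : ∀ i, (hi : i < l.length) →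
      D.Adj (W i) (l[(i+1) % l.length]'(Nat.mod_lt _ (by omega))) ∧
      D.Adj (l[(i + l.length - 1) % l.length]'(Nat.mod_lt _ (by omega))) (W i) := by
    intro i hi
    rcases patternI hT hS hl hne hm3 hpinj hi (hW i hi).1 (hW i hi).2 with hq | hp
    · obtain ⟨q, hq1, hq2⟩ := hq
      exact absurd ⟨q, by omega, hq2⟩ hdone
    · exact hp
  have hWnl : ∀ i, (hi : i < l.length) → W i ∉ l := fun i hi => (hW i hi).1
  have hWne : ∀ i j, (hi : i < l.length) → (hj : j < l.length) → W i = W j → i = j := by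
    intro i j hi hj heq
    apply hpinj i j hi hj
    rw [← (hW i hi).2, ← (hW j hj).2, heq]
  have hm0 : 0 < l.length := by omega
  set m := l.length with hmdef
  by_cases hrev : ∃ i, ∃ hi : i < m, D.Adj (W ((i+1) % m)) (W i)
  · obtain ⟨i, hi, hba⟩ := hrev
    have hbm : (i+1) % m < m := Nat.mod_lt _ hm0
    have hibne : (i+1) % m ≠ i := by
      rcases Nat.lt_or_ge (i+1) m with h1 | h1
      · rw [Nat.mod_eq_of_lt h1]; omega
      · have e : (i+1) % m = 0 := by
          have e2 : i + 1 = m := by omega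
          rw [e2, Nat.mod_self]
        rw [e]; omega
    have hbane : W ((i+1) % m) ≠ W i := by
      intro h
      exact hibne (hWne _ _ hbm hi h)
    refine ⟨m + 2, by omega, ?_⟩
    have hcyc : CycList D (l.rotate ((i+1) % m) ++ [W ((i+1) % m), W i]) := by
      refine cycList_append ((hl.rotate _).chain') (isChain_pair.mpr hba)
        (nodup_rotate.mpr hl.1) (by simp [hbane]) ?_
        (rotate_ne_nil hne _) (by simp) ?_ ?_
      · intro x hx hx2
        simp at hx2
        rcases hx2 with h | h
        · exact hWnl _ hbm (h ▸ mem_rotate.mp hx)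
        · exact hWnl _ hi (h ▸ mem_rotate.mp hx)
      · rw [getLast_rotate hne _]
        show D.Adj _ (W ((i+1) % m))
        have e : (m - 1 + (i+1) % m) % m = i := by
          rw [Nat.add_mod_mod]
          have e2 : m - 1 + (i + 1) = m + i := by omega
          rw [e2, Nat.add_mod_left, Nat.mod_eq_of_lt hi]
        rw [getElem_eq_of_eq e _ hi]
        have h2 := (hpat ((i+1) % m) hbm).2
        have e3 : ((i+1) % m + m - 1) % m = i := by
          have e4 : (i+1) % m + m - 1 = (i+1) % m + (m - 1) := by omega
          rw [e4, Nat.mod_add_mod]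
          have e5 : i + 1 + (m - 1) = m + i := by omega
          rw [e5, Nat.add_mod_left, Nat.mod_eq_of_lt hi]
        rwa [getElem_eq_of_eq e3 _ hi] at h2
      · show D.Adj (W i) _
        rw [head_rotate hne _]
        have h1 := (hpat i hi).1
        rwa [getElem_eq_of_eq (Nat.mod_mod _ _).symm _ (Nat.mod_lt _ hm0)] at h1
    have hcy := hasCycle_of_cycList hcyc (append_ne_nil_of_right_ne_nil _ (by simp))
    have e : (l.rotate ((i+1) % m) ++ [W ((i+1) % m), W i]).length = m + 2 := by simp [hmdef]
    rwa [e] at hcy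
  · push_neg at hrev
    have hWadj : ∀ i, (hi : i < m) → D.Adj (W i) (W ((i+1) % m)) := by
      intro i hi
      have hbm : (i+1) % m < m := Nat.mod_lt _ hm0
      have hibne : (i+1) % m ≠ i := by
        rcases Nat.lt_or_ge (i+1) m with h1 | h1
        · rw [Nat.mod_eq_of_lt h1]; omega
        · have e : (i+1) % m = 0 := by
            have e2 : i + 1 = m := by omega
            rw [e2, Nat.mod_self]
          rw [e]; omega
      have hpne : part (W i) ≠ part (W ((i+1) % m)) := by
        rw [(hW i hi).2, (hW _ hbm).2]
        intro h
        exact hibne (hpinj _ _ hbm hi h.symm)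
      exact (adj_total hT hpne).resolve_right (hrev i hi)
    refine ⟨2 * m, by omega, ?_⟩
    have hcyc : CycList D ((range m).map W ++ l) := by
      refine cycList_append (chain'_rangeMap W m (fun t ht => ?_)) hl.chain'
        (nodup_rangeMap W m (fun a b ha hb heq => hWne a b ha hb heq)) hl.1 ?_
        (rangeMap_ne_nil W (by omega)) hne ?_ ?_
      · have := hWadj t (by omega)
        rwa [Nat.mod_eq_of_lt (by omega : t + 1 < m)] at this
      · intro x hx hx2
        obtain ⟨t, ht, hteq⟩ := mem_rangeMap.mp hx
        exact hWnl t ht (hteq ▸ hx2)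
      · rw [getLast_rangeMap W (by omega), head_eq_getElem_zero]
        have h1 := (hpat (m-1) (by omega)).1
        have e : (m - 1 + 1) % m = 0 := by
          have e2 : m - 1 + 1 = m := by omega
          rw [e2, Nat.mod_self]
        rwa [getElem_eq_of_eq e _ (by omega)] at h1
      · rw [getLast_eq_getElem, head_rangeMap W (by omega)]
        have h2 := (hpat 0 (by omega)).2
        have e : (0 + m - 1) % m = m - 1 := by
          rw [Nat.zero_add, Nat.mod_eq_of_lt (by omega)]
        rwa [getElem_eq_of_eq e _ (by omega)] at h2
    have hcy := hasCycle_of_cycList hcyc (append_ne_nil_of_right_ne_nil _ hne)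
    have e : ((range m).map W ++ l).length = 2 * m := by simp; omega
    rwa [e] at hcy
end BP

end MPT

open MPT

/-- Bondy: every rich `c`-partite tournament (`c ≥ 5`) contains a
`q`-cycle for some `q > c`. -/
theorem stmt_11 {V : Type*} (c : ℕ) (hc : 5 ≤ c) (D : Digraph V) (part : V → Fin c)
    (hT : IsCPT D c part) (hR : IsRich D c part) :
    ∃ q : ℕ, c < q ∧ HasCycle D q := by
  classical
  obtain ⟨hS, hRich⟩ := hR
  obtain ⟨l, hl, hne⟩ := BP.exists_cycList hT hS (by omega)
  rcases BP.grow hT hS (by omega) c l hl hne (by omega) with h | ⟨l', hl', hlen, hall⟩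
  · exact h
  · have hne' : l' ≠ [] := by
      intro h
      rw [h] at hlen
      simp at hlen
      omega
    exact BP.endgame hT hS hRich hl' hne' hlen (by omega) hall
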